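/- Let $\mathfrak{A}$ be a commutative ring and let $M$ be a finitely generated $\mathfrak{A}$-module. If $X \subseteq M$ is a submodule that is free of rank $a$ as an $\mathfrak{A}$-module, then the zeroth Fitting ideal of $M/X$ is contained in the $a$-th Fitting ideal of $M$: $\operatorname{Fit}^0_{\mathfrak{A}}(M/X) \subseteq \operatorname{Fit}^a_{\mathfrak{A}}(M)$. -/

import Mathlib

/-- The `a`-th Fitting ideal of a module `M` over a commutative ring `A`: for a finite
presentation `A^n → M` (surjection with relation module the kernel), it is the ideal
generated by the `(n-a) × (n-a)` minors of the relation matrix; since this is independent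
of the chosen presentation, we take the supremum over all such presentations. -/
noncomputable def fittingIdeal (A : Type*) [CommRing A] (M : Type*) [AddCommGroup M]
    [Module A M] (a : ℕ) : Ideal A :=
  ⨆ (n : ℕ), ⨆ (f : (Fin n → A) →ₗ[A] M), ⨆ (_ : Function.Surjective f),
    Ideal.span { d : A | ∃ (r : Fin (n - a) → Fin n → A) (c : Fin (n - a) → Fin n),
      (∀ k, f (r k) = 0) ∧ d = Matrix.det (Matrix.of fun k l => r k (c l)) }

/-- Let `𝔄` be a commutative ring and `M` a finitely generated `𝔄`-module.
If `X ⊆ M` is a submodule that is free of rank `a` as an `𝔄`-module, then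
`Fit⁰(M/X) ⊆ Fitᵃ(M)`. -/
theorem fittingIdeal_quotient_le
    (𝔄 : Type*) [CommRing 𝔄] (M : Type*) [AddCommGroup M] [Module 𝔄 M] [Module.Finite 𝔄 M]
    (a : ℕ) (X : Submodule 𝔄 M) (b : Module.Basis (Fin a) 𝔄 X) :
    fittingIdeal 𝔄 (M ⧸ X) 0 ≤ fittingIdeal 𝔄 M a := by
  unfold fittingIdeal
  classical
  refine iSup_le fun n => iSup_le fun f => iSup_le fun hf => Ideal.span_le.2 ?_
  rintro d ⟨r, c, hr, rfl⟩
  choose g0 hg0 using fun i : Fin n => Submodule.Quotient.mk_surjective X (f (Pi.single i 1))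
  set g : (Fin n → 𝔄) →ₗ[𝔄] M := Fintype.linearCombination 𝔄 g0 with hgdef
  have hπg : ∀ v, Submodule.Quotient.mk (g v) = f v := by
    intro v
    have : (X.mkQ ∘ₗ g) v = f v := by
      have : X.mkQ ∘ₗ g = f := by
        apply Module.Basis.ext (Pi.basisFun 𝔄 (Fin n))
        intro i
        simp [hgdef, Pi.basisFun_apply, Fintype.linearCombination_apply_single,
          Submodule.mkQ_apply, hg0]
      rw [this]
    simpa using this
  set vecs : Fin (n + a) → M := Fin.append g0 (fun j => (b j : M)) with hvecs
  set F : (Fin (n + a) → 𝔄) →ₗ[𝔄] M := Fintype.linearCombination 𝔄 vecs with hFdef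
  have hFapp : ∀ (v : Fin n → 𝔄) (w : Fin a → 𝔄),
      F (Fin.append v w) = g v + ∑ j, w j • (b j : M) := by
    intro v w
    rw [hFdef, Fintype.linearCombination_apply, Fin.sum_univ_add]
    simp [hvecs, hgdef, Fintype.linearCombination_apply]
  have hsum : ∀ x : X, ∑ j, (b.repr x) j • (b j : M) = (x : M) := by
    intro x
    conv_rhs => rw [← b.sum_repr x]
    simp only [Submodule.coe_sum, Submodule.coe_smul]
  have hFsurj : Function.Surjective F := by
    intro m
    obtain ⟨v, hv⟩ := hf (Submodule.Quotient.mk m)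
    have hx : m - g v ∈ X := by
      rw [← Submodule.Quotient.mk_eq_zero, Submodule.Quotient.mk_sub, hπg, hv, sub_self]
    refine ⟨Fin.append v (b.repr ⟨m - g v, hx⟩), ?_⟩
    rw [hFapp]
    rw [hsum ⟨m - g v, hx⟩]
    simp
  have hrX : ∀ k, g (r k) ∈ X := fun k => by
    rw [← Submodule.Quotient.mk_eq_zero, hπg, hr k]
  have h : n + a - a = n := Nat.add_sub_cancel n a
  set r' : Fin (n + a - a) → Fin (n + a) → 𝔄 :=
    fun k => Fin.append (r (Fin.cast h k)) (-(b.repr ⟨g (r (Fin.cast h k)), hrX _⟩)) with hr'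
  set c' : Fin (n + a - a) → Fin (n + a) := fun l => Fin.castAdd a (c (Fin.cast h l)) with hc'
  refine Submodule.mem_iSup_of_mem (n + a) ?_
  refine Submodule.mem_iSup_of_mem F ?_
  refine Submodule.mem_iSup_of_mem hFsurj ?_
  refine Ideal.subset_span ⟨r', c', ?_, ?_⟩
  · intro k
    rw [hr', hFapp]
    simp only [Pi.neg_apply, neg_smul, Finset.sum_neg_distrib]
    rw [hsum ⟨g (r (Fin.cast h k)), hrX _⟩]
    simp
  · have : (Matrix.of fun k l => r' k (c' l)) =
        (Matrix.of fun k l => r k (c l)).submatrix (finCongr h) (finCongr h) := by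
      ext k l
      simp [hr', hc', Fin.append_left]
    rw [this]
    exact (Matrix.det_submatrix_equiv_self _ _).symm
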